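/- arXiv:1405.0548 — 2 statements merged into one kernel-verified Lean document; each statement's English description precedes it below -/
import Mathlib

section
/- Let K be a field and define for a,b ∈ K the matrices M_x(a,b) = [[a,1],[0,b]] and M_y(a,b) = [[b,0],[1,a]]. For a, b₁,…,b_k, b ∈ K let λ' = (1, a) · M_x(b₁,b₂) · M_x(b₂,b₃) ⋯ M_x(b_{k−1},b_k) · M_y(b_k,b) and λ = (1, b_k). Then the determinant of the 2×2 matrix with first row λ' and second row λ equals b₁b₂⋯b_k·b. -/
def Mx {K : Type*} [Field K] (a b : K) : Matrix (Fin 2) (Fin 2) K := !![a, 1; 0, b]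
def My {K : Type*} [Field K] (a b : K) : Matrix (Fin 2) (Fin 2) K := !![b, 0; 1, a]

lemma aux_first_entry {K : Type*} [Field K] (a : K) (b : ℕ → K) (n : ℕ) :
    (!![1, a] * (((List.range n).map fun i => Mx (b (i + 1)) (b (i + 2))).prod)) 0 0
      = ∏ i ∈ Finset.Icc 1 n, b i := by
  induction n with
  | zero => simp [Matrix.mul_apply]
  | succ n ih =>
      rw [List.range_succ, List.map_append, List.prod_append]
      simp only [List.map_cons, List.map_nil, List.prod_cons, List.prod_nil, mul_one]
      rw [← Matrix.mul_assoc, Finset.prod_Icc_succ_top (Nat.le_add_left 1 n), ← ih]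
      generalize (!![1, a] * ((List.range n).map fun i => Mx (b (i + 1)) (b (i + 2))).prod) = M
      simp [Mx, Matrix.mul_apply, Fin.sum_univ_two]

theorem stmt_1 (K : Type*) [Field K] (k : ℕ) (hk : 1 ≤ k)
    (a b' : K) (b : ℕ → K)
    (lam' : Matrix (Fin 1) (Fin 2) K)
    (hlam' : lam' =
      !![1, a] * (((List.range (k - 1)).map fun i => Mx (b (i + 1)) (b (i + 2))).prod)
        * My (b k) b') :
    Matrix.det !![lam' 0 0, lam' 0 1; 1, b k] =
      (∏ i ∈ Finset.Icc 1 k, b i) * b' := by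
  subst hlam'
  set P := !![(1 : K), a] * (((List.range (k - 1)).map fun i => Mx (b (i + 1)) (b (i + 2))).prod) with hP
  have h00 : (P * My (b k) b') 0 0 = P 0 0 * b' + P 0 1 := by
    simp [My, Matrix.mul_apply, Fin.sum_univ_two]
  have h01 : (P * My (b k) b') 0 1 = P 0 1 * b k := by
    simp [My, Matrix.mul_apply, Fin.sum_univ_two]
  have hfirst : P 0 0 = ∏ i ∈ Finset.Icc 1 (k - 1), b i := aux_first_entry a b (k - 1)
  have hk' : k - 1 + 1 = k := Nat.succ_pred_eq_of_pos hk
  have hprod := Finset.prod_Icc_succ_top (Nat.le_add_left 1 (k-1)) b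
  rw [hk'] at hprod
  rw [Matrix.det_fin_two_of, h00, h01, hfirst, hprod]
  ring
end

section
/- Let K be a field, with matrices M_x(a,b) = [[a,1],[0,b]] and M_y(a,b) = [[b,0],[1,a]]. Let A be a 2×2 matrix over K, and let a, b₁,…,b_k, b, c, c₁,…,c_l, d ∈ K with k, l ≥ 1. Define p = (1, b_k)·A·(1, c₁)ᵀ, q = (1, b_k)·A·M_x(c,c₁)·M_y(c₁,c₂)⋯M_y(c_{l−1},c_l)·(1,d)ᵀ, r = (1,a)·M_x(b₁,b₂)⋯M_x(b_{k−1},b_k)·M_y(b_k,b)·A·(1,c₁)ᵀ, and s = (1,a)·M_x(b₁,b₂)⋯M_x(b_{k−1},b_k)·M_y(b_k,b)·A·M_x(c,c₁)·M_y(c₁,c₂)⋯M_y(c_{l−1},c_l)·(1,d)ᵀ. Then ps − qr = b₁⋯b_k · b · c · c₁⋯c_l · det A. -/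
lemma row_eta {K : Type*} [Field K] (M : Matrix (Fin 1) (Fin 2) K) :
    M = !![M 0 0, M 0 1] := by
  ext i j; fin_cases i <;> fin_cases j <;> simp

lemma col_eta {K : Type*} [Field K] (M : Matrix (Fin 2) (Fin 1) K) :
    M = !![M 0 0; M 1 0] := by
  ext i j; fin_cases i <;> fin_cases j <;> simp

lemma row_prod {K : Type*} [Field K] (b : ℕ → K) (n : ℕ) (r : Matrix (Fin 1) (Fin 2) K) :
    (r * ((List.range n).map fun i => Mx (b (i + 1)) (b (i + 2))).prod) 0 0
      = r 0 0 * ∏ i ∈ Finset.range n, b (i + 1) := by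
  induction n with
  | zero => simp
  | succ n ih =>
      rw [List.range_succ, List.map_append, List.prod_append, Finset.prod_range_succ]
      simp only [List.map_cons, List.map_nil, List.prod_cons, List.prod_nil, mul_one]
      rw [← Matrix.mul_assoc]
      have : (r * ((List.range n).map fun i => Mx (b (i + 1)) (b (i + 2))).prod *
          Mx (b (n + 1)) (b (n + 2))) 0 0
          = (r * ((List.range n).map fun i => Mx (b (i + 1)) (b (i + 2))).prod) 0 0 * b (n + 1) := by
        simp [Matrix.mul_apply, Fin.sum_univ_two, Mx]
      rw [this, ih, mul_assoc]

lemma col_prod {K : Type*} [Field K] (c : ℕ → K) (n : ℕ) (v : Matrix (Fin 2) (Fin 1) K) :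
    (((List.range n).map fun i => My (c (i + 1)) (c (i + 2))).prod * v) 0 0
      = (∏ i ∈ Finset.range n, c (i + 2)) * v 0 0 := by
  induction n generalizing v with
  | zero => simp
  | succ n ih =>
      rw [List.range_succ, List.map_append, List.prod_append, Finset.prod_range_succ]
      simp only [List.map_cons, List.map_nil, List.prod_cons, List.prod_nil, mul_one]
      rw [Matrix.mul_assoc, ih (My (c (n + 1)) (c (n + 2)) * v)]
      have : (My (c (n + 1)) (c (n + 2)) * v) 0 0 = c (n + 2) * v 0 0 := by
        simp [Matrix.mul_apply, Fin.sum_univ_two, My]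
      rw [this]; ring

lemma key {K : Type*} [Field K] (A : Matrix (Fin 2) (Fin 2) K)
    (u0 u1 v0 v1 w0 w1 z0 z1 : K) :
    (!![u0, u1] * A * !![w0; w1]) 0 0 * (!![v0, v1] * A * !![z0; z1]) 0 0
      - (!![u0, u1] * A * !![z0; z1]) 0 0 * (!![v0, v1] * A * !![w0; w1]) 0 0
      = (u0 * v1 - u1 * v0) * (w0 * z1 - w1 * z0) * A.det := by
  simp [Matrix.mul_apply, Matrix.vecMul, dotProduct, Fin.sum_univ_two,
    Matrix.det_fin_two]
  ring

lemma Icc_prod {K : Type*} [CommMonoid K] (b : ℕ → K) (m : ℕ) :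
    ∏ i ∈ Finset.Icc 1 (m + 1), b i
      = (∏ i ∈ Finset.range m, b (i + 1)) * b (m + 1) := by
  induction m with
  | zero => simp
  | succ m ih =>
      rw [Finset.prod_Icc_succ_top (by omega : 1 ≤ m + 2), ih, Finset.prod_range_succ]

theorem stmt_4 (K : Type*) [Field K] (k l : ℕ) (hk : 1 ≤ k) (hl : 1 ≤ l)
    (A : Matrix (Fin 2) (Fin 2) K)
    (a b' c' d : K) (b c : ℕ → K)
    (Px Qy : Matrix (Fin 2) (Fin 2) K)
    (hPx : Px = ((List.range (k - 1)).map fun i => Mx (b (i + 1)) (b (i + 2))).prod)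
    (hQy : Qy = Mx c' (c 1) *
      ((List.range (l - 1)).map fun i => My (c (i + 1)) (c (i + 2))).prod)
    (p q r s : K)
    (hp : p = (!![1, b k] * A * !![(1 : K); c 1]) 0 0)
    (hq : q = (!![1, b k] * A * Qy * !![(1 : K); d]) 0 0)
    (hr : r = (!![1, a] * Px * My (b k) b' * A * !![(1 : K); c 1]) 0 0)
    (hs : s = (!![1, a] * Px * My (b k) b' * A * Qy * !![(1 : K); d]) 0 0) :
    p * s - q * r =
      (∏ i ∈ Finset.Icc 1 k, b i) * b' * c' * (∏ i ∈ Finset.Icc 1 l, c i) * A.det := by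
  obtain ⟨m, rfl⟩ : ∃ m, k = m + 1 := ⟨k - 1, (Nat.succ_pred_eq_of_pos hk).symm⟩
  obtain ⟨n, rfl⟩ : ∃ n, l = n + 1 := ⟨l - 1, (Nat.succ_pred_eq_of_pos hl).symm⟩
  set V : Matrix (Fin 1) (Fin 2) K := !![1, a] * Px * My (b (m + 1)) b' with hV
  set Z : Matrix (Fin 2) (Fin 1) K := Qy * !![(1 : K); d] with hZ
  set e : Matrix (Fin 1) (Fin 2) K := !![1, a] * Px with he
  have he00 : e 0 0 = ∏ i ∈ Finset.range m, b (i + 1) := by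
    rw [he, hPx]; simpa using row_prod b m !![1, a]
  have hv0 : V 0 0 = e 0 0 * b' + e 0 1 := by
    rw [hV]; simp [Matrix.mul_apply, Fin.sum_univ_two, My]
  have hv1 : V 0 1 = e 0 1 * b (m + 1) := by
    rw [hV]; simp [Matrix.mul_apply, Fin.sum_univ_two, My]
  set W : Matrix (Fin 2) (Fin 1) K :=
    ((List.range n).map fun i => My (c (i + 1)) (c (i + 2))).prod * !![(1 : K); d] with hW
  have hw00 : W 0 0 = ∏ i ∈ Finset.range n, c (i + 2) := by
    rw [hW]; simpa using col_prod c n !![(1 : K); d]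
  have hZW : Z = Mx c' (c 1) * W := by
    rw [hZ, hQy, hW, Matrix.mul_assoc]; simp
  have hz0 : Z 0 0 = c' * W 0 0 + W 1 0 := by
    rw [hZW]; simp [Matrix.mul_apply, Fin.sum_univ_two, Mx]
  have hz1 : Z 1 0 = c 1 * W 1 0 := by
    rw [hZW]; simp [Matrix.mul_apply, Fin.sum_univ_two, Mx]
  have hq' : q = (!![1, b (m + 1)] * A * !![Z 0 0; Z 1 0]) 0 0 := by
    rw [hq, Matrix.mul_assoc _ Qy, ← hZ, ← col_eta Z]
  have hr' : r = (!![V 0 0, V 0 1] * A * !![(1 : K); c 1]) 0 0 := by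
    rw [hr, ← row_eta V]
  have hs' : s = (!![V 0 0, V 0 1] * A * !![Z 0 0; Z 1 0]) 0 0 := by
    rw [hs, Matrix.mul_assoc _ Qy, ← hZ, ← col_eta Z, ← row_eta V]
  rw [hp, hq', hr', hs', key]
  have hdetV : 1 * V 0 1 - b (m + 1) * V 0 0
      = -((∏ i ∈ Finset.range m, b (i + 1)) * b (m + 1) * b') := by
    rw [hv0, hv1, he00]; ring
  have hdetZ : 1 * Z 1 0 - c 1 * Z 0 0
      = -(c' * (c 1 * ∏ i ∈ Finset.range n, c (i + 2))) := by
    rw [hz0, hz1, hw00]; ring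
  rw [hdetV, hdetZ, Icc_prod b m, Icc_prod c n]
  have h1 : (∏ i ∈ Finset.range n, c (i + 1)) * c (n + 1)
      = c 1 * ∏ i ∈ Finset.range n, c (i + 2) := by
    have := Finset.prod_range_succ' (fun i => c (i + 1)) n
    rw [← Finset.prod_range_succ (fun i => c (i + 1)) n, this]
    simp [mul_comm]
  rw [h1]; ring
end
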